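/- Let A and A' be finite non-unital, non-associative k-algebras, with A prime and Id(A') ⊆ Id(A). Then A is isomorphic to a section of A': there exist a subalgebra R of A' and an ideal I of R such that A ≅ R/I as k-algebras. -/

import Mathlib

universe u v w x
open Function
noncomputable section

/-- The free non-unital, non-associative `k`-algebra on the countably many
generators `x₁, x₂, …` (indexed by `ℕ`): the magma algebra over `k` of the free
magma on `ℕ`. -/
abbrev FreeAlg (k : Type u) [CommRing k] : Type u := FreeNonUnitalNonAssocAlgebra k ℕ

/-- `f` is a polynomial identity of the algebra `A`: every `k`-algebra
homomorphism from the free algebra to `A` sends `f` to `0`. -/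
def IsPI (k : Type u) [CommRing k] (A : Type v) [NonUnitalNonAssocRing A] [Module k A]
    [SMulCommClass k A A] [IsScalarTower k A A] (f : FreeAlg k) : Prop :=
  ∀ φ : FreeAlg k →ₙₐ[k] A, φ f = 0

/-- `Id(A)`: the set of all polynomial identities of `A`. -/
def Ids (k : Type u) [CommRing k] (A : Type v) [NonUnitalNonAssocRing A] [Module k A]
    [SMulCommClass k A A] [IsScalarTower k A A] : Set (FreeAlg k) :=
  {f | IsPI k A f}
/-- Number of occurrences of the variable `i` in a free-magma word. -/
def varCount : FreeMagma ℕ → ℕ → ℕ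
  | FreeMagma.of x, i => if x = i then 1 else 0
  | FreeMagma.mul a b, i => varCount a i + varCount b i

/-- `f` is multilinear in the first `m` variables `x₁, …, x_m`: it is a `k`-linear
combination of monomials in each of which every one of the first `m` variables occurs
exactly once and no other variable occurs. -/
def IsMultilinear (k : Type u) [CommRing k] (m : ℕ) (f : FreeAlg k) : Prop :=
  f ∈ Submodule.span k {w : FreeAlg k |
    ∃ u : FreeMagma ℕ, (∀ i, varCount u i = if i < m then 1 else 0) ∧
      w = FreeMagma.lift (FreeNonUnitalNonAssocAlgebra.of k) u}
/-- An ideal of the algebra `A`: a `k`-submodule `I` with `AI ⊆ I` and `IA ⊆ I`. -/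
def IsIdeal (k : Type u) [CommRing k] (A : Type v) [NonUnitalNonAssocRing A] [Module k A]
    (I : Submodule k A) : Prop :=
  ∀ a : A, ∀ x ∈ I, a * x ∈ I ∧ x * a ∈ I
/-- The product `S·T` of two subsets of `A`: the `k`-span of all values
`f(s, t, a₁, …, a_t)` of polynomials `f` multilinear in `x₁, …, x_{2+t}`,
where `s ∈ S`, `t ∈ T` and the remaining arguments run over `A`. -/
def mulSet (k : Type u) [CommRing k] (A : Type v) [NonUnitalNonAssocRing A] [Module k A]
    [SMulCommClass k A A] [IsScalarTower k A A] (S T : Set A) : Submodule k A :=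
  Submodule.span k {y : A | ∃ (t : ℕ) (f : FreeAlg k), IsMultilinear k (2 + t) f ∧
    ∃ v : ℕ → A, v 0 ∈ S ∧ v 1 ∈ T ∧ FreeNonUnitalNonAssocAlgebra.lift k v f = y}
/-- `A` is a prime algebra: `I·J ≠ 0` for all nonzero ideals `I, J` of `A`. -/
def IsPrimeAlg (k : Type u) [CommRing k] (A : Type v) [NonUnitalNonAssocRing A] [Module k A]
    [SMulCommClass k A A] [IsScalarTower k A A] : Prop :=
  ∀ I J : Submodule k A, IsIdeal k A I → IsIdeal k A J → I ≠ ⊥ → J ≠ ⊥ →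
    mulSet k A (I : Set A) (J : Set A) ≠ ⊥

variable (k : Type u) [CommRing k]

@[simp] lemma varCount_of (x i : ℕ) : varCount (FreeMagma.of x) i = if x = i then 1 else 0 := rfl
@[simp] lemma varCount_mul (a b : FreeMagma ℕ) (i : ℕ) :
    varCount (a * b) i = varCount a i + varCount b i := rfl

section Magma
variable {B : Type v} [NonUnitalNonAssocRing B] [Module k B]
  [SMulCommClass k B B] [IsScalarTower k B B]

/-- the canonical image of a magma word in the free algebra -/
def liftword (u : FreeMagma ℕ) : FreeAlg k :=
  FreeMagma.lift (FreeNonUnitalNonAssocAlgebra.of k) u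

lemma eval_word (v : ℕ → B) (u : FreeMagma ℕ) :
    FreeNonUnitalNonAssocAlgebra.lift k v (liftword k u) = FreeMagma.lift v u := by
  induction u with
  | ih1 i => simp [liftword]
  | ih2 a b ha hb => simp only [liftword, map_mul] at *; rw [ha, hb]

lemma magma_eval_congr {v w : ℕ → B} (u : FreeMagma ℕ)
    (h : ∀ i, varCount u i ≠ 0 → v i = w i) :
    FreeMagma.lift v u = FreeMagma.lift w u := by
  induction u with
  | ih1 i => simpa [varCount] using h i (by simp [varCount])
  | ih2 a b ha hb =>
      simp only [map_mul]
      rw [ha fun i hi => h i (by simp [varCount]; omega),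
        hb fun i hi => h i (by simp [varCount]; omega)]

lemma magma_eval_vanish {v : ℕ → B} {j : ℕ} (u : FreeMagma ℕ)
    (hc : varCount u j ≠ 0) (hv : v j = 0) : FreeMagma.lift v u = 0 := by
  induction u with
  | ih1 i =>
      simp only [varCount] at hc
      have : i = j := by by_contra h; simp [h] at hc
      simpa [this]
  | ih2 a b ha hb =>
      simp only [varCount] at hc
      simp only [map_mul]
      rcases Nat.eq_zero_or_pos (varCount a j) with h | h
      · rw [hb (by omega)]; exact mul_zero _
      · rw [ha (by omega)]; exact zero_mul _

lemma varCount_bound (u : FreeMagma ℕ) : ∃ N, ∀ i, N ≤ i → varCount u i = 0 := by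
  induction u with
  | ih1 x => exact ⟨x + 1, fun i hi => by simp [varCount]; omega⟩
  | ih2 a b ha hb =>
      obtain ⟨N1, h1⟩ := ha; obtain ⟨N2, h2⟩ := hb
      exact ⟨max N1 N2, fun i hi => by
        simp [varCount, h1 i (le_trans (le_max_left _ _) hi),
          h2 i (le_trans (le_max_right _ _) hi)]⟩

end Magma
/-- variable-count profile as a finsupp -/
def vcF : FreeMagma ℕ → (ℕ →₀ ℕ)
  | FreeMagma.of x => Finsupp.single x 1
  | FreeMagma.mul a b => vcF a + vcF b

@[simp] lemma vcF_of (x : ℕ) : vcF (FreeMagma.of x) = Finsupp.single x 1 := rfl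
@[simp] lemma vcF_mul (a b : FreeMagma ℕ) : vcF (a * b) = vcF a + vcF b := rfl

lemma vcF_apply (u : FreeMagma ℕ) (i : ℕ) : vcF u i = varCount u i := by
  induction u with
  | ih1 x => simp [Finsupp.single_apply]
  | ih2 a b ha hb => simp [ha, hb]

/-- the span of all words with a given variable-count profile -/
def HwF (Q : ℕ →₀ ℕ) : Submodule k (FreeAlg k) :=
  Submodule.span k {w | ∃ u : FreeMagma ℕ, vcF u = Q ∧ w = liftword k u}

lemma word_mem_HwF (u : FreeMagma ℕ) : liftword k u ∈ HwF k (vcF u) :=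
  Submodule.subset_span ⟨u, rfl, rfl⟩

/-- profile of a polynomial multilinear in the first `m` variables -/
def mlProf (m : ℕ) : ℕ →₀ ℕ := (Finset.range m).sum fun i => Finsupp.single i 1

lemma mlProf_apply (m i : ℕ) : mlProf m i = if i < m then 1 else 0 := by
  unfold mlProf
  rw [Finset.sum_apply']
  by_cases h : i < m
  · rw [Finset.sum_eq_single i (fun b _ hb => Finsupp.single_eq_of_ne' hb)
      (fun h' => absurd (Finset.mem_range.2 h) h')]
    simp [h]
  · simp only [if_neg h]
    exact Finset.sum_eq_zero fun b hb =>
      Finsupp.single_eq_of_ne' (by rintro rfl; exact h (Finset.mem_range.1 hb))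

lemma isMultilinear_iff_HwF (m : ℕ) (f : FreeAlg k) :
    IsMultilinear k m f ↔ f ∈ HwF k (mlProf m) := by
  have hprof := mlProf_apply m
  unfold IsMultilinear HwF
  congr! 3 with w
  ext w
  simp only [Set.mem_setOf_eq, liftword]
  constructor
  · rintro ⟨u, hu, rfl⟩
    exact ⟨u, Finsupp.ext fun i => by rw [vcF_apply, hu i, hprof i], rfl⟩
  · rintro ⟨u, hu, rfl⟩
    exact ⟨u, fun i => by rw [← vcF_apply, hu, hprof i], rfl⟩

lemma span_words_eq_top : Submodule.span k {w | ∃ u : FreeMagma ℕ, w = liftword k u} = ⊤ := by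
  rw [Submodule.eq_top_iff']
  intro f
  induction f using MonoidAlgebra.induction_linear with
  | zero => exact Submodule.zero_mem _
  | add f g hf hg => exact Submodule.add_mem _ hf hg
  | single u c =>
      have hw : ∀ u : FreeMagma ℕ, liftword k u = MonoidAlgebra.single u (1 : k) := by
        intro u
        induction u with
        | ih1 x => rfl
        | ih2 a b ha hb =>
            rw [liftword, map_mul, ← liftword, ← liftword, ha, hb,
              MonoidAlgebra.single_mul_single, one_mul]
      have : (MonoidAlgebra.single u c : FreeAlg k) = c • (MonoidAlgebra.single u 1 : FreeAlg k) := by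
        rw [MonoidAlgebra.smul_single', mul_one]
      rw [this]
      exact Submodule.smul_mem _ _ (Submodule.subset_span ⟨u, (hw u).symm⟩)
section HwFLemmas
variable {k}
variable {B : Type v} [NonUnitalNonAssocRing B] [Module k B]
  [SMulCommClass k B B] [IsScalarTower k B B]

lemma HwF_eval_congr {Q : ℕ →₀ ℕ} {f : FreeAlg k} (hf : f ∈ HwF k Q)
    {v w : ℕ → B} (h : ∀ i, Q i ≠ 0 → v i = w i) :
    FreeNonUnitalNonAssocAlgebra.lift k v f = FreeNonUnitalNonAssocAlgebra.lift k w f := by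
  induction hf using Submodule.span_induction with
  | mem x hx =>
      obtain ⟨u, hu, rfl⟩ := hx
      rw [eval_word, eval_word]
      exact magma_eval_congr u fun i hi => h i (by rw [← hu, vcF_apply]; exact hi)
  | zero => simp
  | add x y hx hy ihx ihy => simp [ihx, ihy]
  | smul c x hx ihx => simp [ihx]

lemma HwF_eval_vanish {Q : ℕ →₀ ℕ} {f : FreeAlg k} (hf : f ∈ HwF k Q)
    {j : ℕ} (hj : Q j ≠ 0) {v : ℕ → B} (hv : v j = 0) :
    FreeNonUnitalNonAssocAlgebra.lift k v f = 0 := by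
  induction hf using Submodule.span_induction with
  | mem x hx =>
      obtain ⟨u, hu, rfl⟩ := hx
      rw [eval_word]
      exact magma_eval_vanish u (by rw [← vcF_apply, hu]; exact hj) hv
  | zero => simp
  | add x y hx hy ihx ihy => simp [ihx, ihy]
  | smul c x hx ihx => simp [ihx]

lemma HwF_mul {Q1 Q2 : ℕ →₀ ℕ} {a b : FreeAlg k}
    (ha : a ∈ HwF k Q1) (hb : b ∈ HwF k Q2) : a * b ∈ HwF k (Q1 + Q2) := by
  induction ha using Submodule.span_induction with
  | mem x hx =>
      obtain ⟨u1, hu1, rfl⟩ := hx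
      induction hb using Submodule.span_induction with
      | mem y hy =>
          obtain ⟨u2, hu2, rfl⟩ := hy
          have : liftword k u1 * liftword k u2 = liftword k (u1 * u2) := by
            rw [liftword, liftword, liftword, map_mul]
          rw [this]
          have : Q1 + Q2 = vcF (u1 * u2) := by rw [vcF_mul, hu1, hu2]
          rw [this]
          exact word_mem_HwF k _
      | zero => rw [mul_zero]; exact Submodule.zero_mem _
      | add y z hy hz ihy ihz => rw [mul_add]; exact Submodule.add_mem _ ihy ihz
      | smul c y hy ihy => rw [mul_smul_comm]; exact Submodule.smul_mem _ _ ihy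
  | zero => rw [zero_mul]; exact Submodule.zero_mem _
  | add x y hx hy ihx ihy => rw [add_mul]; exact Submodule.add_mem _ ihx ihy
  | smul c x hx ihx => rw [smul_mul_assoc]; exact Submodule.smul_mem _ _ ihx

lemma HwF_subst {g : ℕ → FreeAlg k} {P : ℕ → ℕ →₀ ℕ} (hg : ∀ i, g i ∈ HwF k (P i))
    {Q : ℕ →₀ ℕ} {f : FreeAlg k} (hf : f ∈ HwF k Q) :
    FreeNonUnitalNonAssocAlgebra.lift k g f ∈ HwF k (Q.sum fun i n => n • P i) := by
  induction hf using Submodule.span_induction with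
  | mem x hx =>
      obtain ⟨u, hu, rfl⟩ := hx
      subst hu
      rw [eval_word]
      induction u with
      | ih1 i =>
          simp only [vcF_of]
          rw [Finsupp.sum_single_index (by simp)]
          simpa using hg i
      | ih2 a b ha hb =>
          rw [map_mul, vcF_mul, Finsupp.sum_add_index' (fun i => by simp)
            (fun i m n => add_smul m n (P i))]
          exact HwF_mul ha hb
  | zero => exact Submodule.zero_mem _
  | add x y hx hy ihx ihy => rw [map_add]; exact Submodule.add_mem _ ihx ihy
  | smul c x hx ihx => rw [map_smul]; exact Submodule.smul_mem _ _ ihx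

end HwFLemmas
section Slot
variable {k}
variable {B : Type v} [NonUnitalNonAssocRing B] [Module k B]
  [SMulCommClass k B B] [IsScalarTower k B B]

lemma magma_update_irrel {v : ℕ → B} {j : ℕ} (u : FreeMagma ℕ) (hc : varCount u j = 0)
    (z : B) : FreeMagma.lift (Function.update v j z) u = FreeMagma.lift v u :=
  magma_eval_congr u fun i hi => by
    rcases eq_or_ne i j with rfl | h
    · exact absurd hc hi
    · simp [Function.update_of_ne h]

lemma magma_slot_add {v : ℕ → B} {j : ℕ} (u : FreeMagma ℕ) (hc : varCount u j = 1)
    (x y : B) : FreeMagma.lift (Function.update v j (x + y)) u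
      = FreeMagma.lift (Function.update v j x) u + FreeMagma.lift (Function.update v j y) u := by
  induction u with
  | ih1 i =>
      have : i = j := by by_contra h; simp [h] at hc
      subst this; simp
  | ih2 a b ha hb =>
      simp only [varCount_mul] at hc
      simp only [map_mul]
      rcases Nat.eq_zero_or_pos (varCount a j) with h | h
      · have hb1 : varCount b j = 1 := by omega
        rw [magma_update_irrel a h, magma_update_irrel a h, magma_update_irrel a h,
          hb hb1, mul_add]
      · have ha1 : varCount a j = 1 := by omega
        have hb0 : varCount b j = 0 := by omega
        rw [magma_update_irrel b hb0, magma_update_irrel b hb0, magma_update_irrel b hb0,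
          ha ha1, add_mul]

lemma magma_slot_smul {v : ℕ → B} {j : ℕ} (u : FreeMagma ℕ) (hc : varCount u j = 1)
    (c : k) (x : B) : FreeMagma.lift (Function.update v j (c • x)) u
      = c • FreeMagma.lift (Function.update v j x) u := by
  induction u with
  | ih1 i =>
      have : i = j := by by_contra h; simp [h] at hc
      subst this; simp
  | ih2 a b ha hb =>
      simp only [varCount_mul] at hc
      simp only [map_mul]
      rcases Nat.eq_zero_or_pos (varCount a j) with h | h
      · have hb1 : varCount b j = 1 := by omega
        rw [magma_update_irrel a h, magma_update_irrel a h, hb hb1, mul_smul_comm]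
      · have ha1 : varCount a j = 1 := by omega
        have hb0 : varCount b j = 0 := by omega
        rw [magma_update_irrel b hb0, magma_update_irrel b hb0, ha ha1, smul_mul_assoc]

lemma HwF_slot_add {Q : ℕ →₀ ℕ} {f : FreeAlg k} (hf : f ∈ HwF k Q) {j : ℕ} (hj : Q j = 1)
    (v : ℕ → B) (x y : B) :
    FreeNonUnitalNonAssocAlgebra.lift k (Function.update v j (x + y)) f
      = FreeNonUnitalNonAssocAlgebra.lift k (Function.update v j x) f
        + FreeNonUnitalNonAssocAlgebra.lift k (Function.update v j y) f := by
  induction hf using Submodule.span_induction with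
  | mem w hw =>
      obtain ⟨u, hu, rfl⟩ := hw
      rw [eval_word, eval_word, eval_word]
      exact magma_slot_add u (by rw [← vcF_apply, hu]; exact hj) x y
  | zero => simp
  | add a b ha hb iha ihb => simp only [map_add, iha, ihb]; abel
  | smul c a ha iha => simp only [map_smul, iha]; rw [smul_add]

lemma HwF_slot_smul {Q : ℕ →₀ ℕ} {f : FreeAlg k} (hf : f ∈ HwF k Q) {j : ℕ} (hj : Q j = 1)
    (v : ℕ → B) (c : k) (x : B) :
    FreeNonUnitalNonAssocAlgebra.lift k (Function.update v j (c • x)) f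
      = c • FreeNonUnitalNonAssocAlgebra.lift k (Function.update v j x) f := by
  induction hf using Submodule.span_induction with
  | mem w hw =>
      obtain ⟨u, hu, rfl⟩ := hw
      rw [eval_word, eval_word]
      exact magma_slot_smul u (by rw [← vcF_apply, hu]; exact hj) c x
  | zero => simp
  | add a b ha hb iha ihb => simp only [map_add, iha, ihb]; rw [smul_add]
  | smul d a ha iha => simp only [map_smul, iha]; rw [smul_comm]

/-- extraction: if a multilinear slot is filled with an element of a span and the value is
nonzero, then some generator also gives a nonzero value. -/
lemma HwF_extract {Q : ℕ →₀ ℕ} {f : FreeAlg k} (hf : f ∈ HwF k Q) {j : ℕ} (hj : Q j = 1)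
    {S : Set B} {v : ℕ → B} {y : B} (hy : y ∈ Submodule.span k S)
    (hne : FreeNonUnitalNonAssocAlgebra.lift k (Function.update v j y) f ≠ 0) :
    ∃ s ∈ S, FreeNonUnitalNonAssocAlgebra.lift k (Function.update v j s) f ≠ 0 := by
  induction hy using Submodule.span_induction with
  | mem s hs => exact ⟨s, hs, hne⟩
  | zero =>
      exact absurd (HwF_eval_vanish hf (by omega) (Function.update_self j 0 v)) hne
  | add a b ha hb iha ihb =>
      rw [HwF_slot_add hf hj] at hne
      by_cases h : FreeNonUnitalNonAssocAlgebra.lift k (Function.update v j a) f = 0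
      · exact ihb fun h0 => hne (by rw [h, h0, add_zero])
      · exact iha h
  | smul c a ha iha =>
      rw [HwF_slot_smul hf hj] at hne
      exact iha fun h0 => hne (by rw [h0, smul_zero])

end Slot
section Ideals
variable {k}
variable {A : Type v} [NonUnitalNonAssocRing A] [Module k A]
  [SMulCommClass k A A] [IsScalarTower k A A]

/-- the generating set for the ideal generated by `a` -/
def Ngen (a : A) : Set A :=
  {y | ∃ u : FreeMagma ℕ, varCount u 0 = 1 ∧ ∃ v : ℕ → A, v 0 = a ∧ FreeMagma.lift v u = y}

/-- the ideal generated by `a` -/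
def Nid (a : A) : Submodule k A := Submodule.span k (Ngen a)

lemma self_mem_Ngen (a : A) : a ∈ Ngen a :=
  ⟨FreeMagma.of 0, by simp, fun _ => a, rfl, rfl⟩

lemma self_mem_Nid (a : A) : a ∈ Nid (k := k) a :=
  Submodule.subset_span (self_mem_Ngen a)

lemma Nid_ne_bot {a : A} (ha : a ≠ 0) : Nid (k := k) a ≠ ⊥ := fun h =>
  ha (by simpa [h] using self_mem_Nid (k := k) a)

lemma Ngen_mul_closed (a : A) (a' : A) {y : A} (hy : y ∈ Ngen a) :
    a' * y ∈ Ngen a ∧ y * a' ∈ Ngen a := by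
  obtain ⟨u, hu, v, hv0, rfl⟩ := hy
  obtain ⟨N, hN⟩ := varCount_bound u
  set j := max N 1 with hj
  have hj0 : j ≠ 0 := by omega
  have hjc : varCount u j = 0 := hN j (le_max_left _ _)
  have hveq : FreeMagma.lift (Function.update v j a') u = FreeMagma.lift v u :=
    magma_update_irrel u hjc a'
  constructor
  · refine ⟨FreeMagma.of j * u, by simp [if_neg hj0, hu], Function.update v j a', ?_, ?_⟩
    · rw [Function.update_of_ne (Ne.symm hj0), hv0]
    · rw [map_mul, FreeMagma.lift_of, Function.update_self, hveq]
  · refine ⟨u * FreeMagma.of j, by simp [if_neg hj0, hu], Function.update v j a', ?_, ?_⟩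
    · rw [Function.update_of_ne (Ne.symm hj0), hv0]
    · rw [map_mul, FreeMagma.lift_of, Function.update_self, hveq]

lemma Nid_isIdeal (a : A) : IsIdeal k A (Nid a) := by
  intro a' x hx
  induction hx using Submodule.span_induction with
  | mem y hy =>
      obtain ⟨h1, h2⟩ := Ngen_mul_closed a a' hy
      exact ⟨Submodule.subset_span h1, Submodule.subset_span h2⟩
  | zero => simp [Submodule.zero_mem]
  | add x y hx hy ihx ihy =>
      exact ⟨by rw [mul_add]; exact Submodule.add_mem _ ihx.1 ihy.1,
        by rw [add_mul]; exact Submodule.add_mem _ ihx.2 ihy.2⟩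
  | smul c x hx ihx =>
      exact ⟨by rw [mul_smul_comm]; exact Submodule.smul_mem _ _ ihx.1,
        by rw [smul_mul_assoc]; exact Submodule.smul_mem _ _ ihx.2⟩

end Ideals
section Helpers
variable {k}
variable {B : Type v} [NonUnitalNonAssocRing B] [Module k B]
  [SMulCommClass k B B] [IsScalarTower k B B]

lemma lift_comp_eval (g : ℕ → FreeAlg k) (v : ℕ → B) (f : FreeAlg k) :
    FreeNonUnitalNonAssocAlgebra.lift k v (FreeNonUnitalNonAssocAlgebra.lift k g f)
      = FreeNonUnitalNonAssocAlgebra.lift k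
          (fun i => FreeNonUnitalNonAssocAlgebra.lift k v (g i)) f := by
  have : (FreeNonUnitalNonAssocAlgebra.lift k v).comp (FreeNonUnitalNonAssocAlgebra.lift k g)
      = FreeNonUnitalNonAssocAlgebra.lift k
          (fun i => FreeNonUnitalNonAssocAlgebra.lift k v (g i)) := by
    apply FreeNonUnitalNonAssocAlgebra.hom_ext
    intro x
    simp
  exact DFunLike.congr_fun this f

lemma of_mem_HwF (x : ℕ) :
    FreeNonUnitalNonAssocAlgebra.of k x ∈ HwF k (Finsupp.single x 1) := by
  have h1 : liftword k (FreeMagma.of x) = FreeNonUnitalNonAssocAlgebra.of k x := by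
    simp [liftword]
  have := word_mem_HwF k (FreeMagma.of x)
  rwa [h1, vcF_of] at this

lemma rmap_eq_mapDomain (τ : ℕ → ℕ) (Q : ℕ →₀ ℕ) :
    (Q.sum fun i n => n • Finsupp.single (τ i) 1) = Finsupp.mapDomain τ Q := by
  rw [Finsupp.mapDomain]
  exact Finsupp.sum_congr fun i _ => by
    rw [Finsupp.smul_single, smul_eq_mul, mul_one]

lemma rename_mem_HwF (τ : ℕ → ℕ) {Q : ℕ →₀ ℕ} {f : FreeAlg k} (hf : f ∈ HwF k Q) :
    FreeNonUnitalNonAssocAlgebra.lift k (fun i => FreeNonUnitalNonAssocAlgebra.of k (τ i)) f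
      ∈ HwF k (Finsupp.mapDomain τ Q) := by
  rw [← rmap_eq_mapDomain]
  exact HwF_subst (fun i => of_mem_HwF (τ i)) hf

lemma rename_eval (τ : ℕ → ℕ) (v : ℕ → B) (f : FreeAlg k) :
    FreeNonUnitalNonAssocAlgebra.lift k v
        (FreeNonUnitalNonAssocAlgebra.lift k
          (fun i => FreeNonUnitalNonAssocAlgebra.of k (τ i)) f)
      = FreeNonUnitalNonAssocAlgebra.lift k (fun i => v (τ i)) f := by
  rw [lift_comp_eval]
  simp

lemma fsum_apply_single {Q : ℕ →₀ ℕ} {P : ℕ → ℕ →₀ ℕ} {x i0 : ℕ} (h0 : Q i0 ≠ 0)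
    (hoth : ∀ i, i ≠ i0 → Q i ≠ 0 → P i x = 0) :
    (Q.sum fun i n => n • P i) x = Q i0 * P i0 x := by
  rw [Finsupp.sum_apply]
  rw [Finsupp.sum]
  rw [Finset.sum_eq_single i0]
  · simp [smul_eq_mul]
  · intro b hb hbne
    rw [Finsupp.smul_apply, hoth b hbne (Finsupp.mem_support_iff.1 hb), smul_zero]
  · intro hns
    exact absurd (Finsupp.notMem_support_iff.1 hns) h0

lemma fsum_apply_zero {Q : ℕ →₀ ℕ} {P : ℕ → ℕ →₀ ℕ} {x : ℕ}
    (hall : ∀ i, Q i ≠ 0 → P i x = 0) :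
    (Q.sum fun i n => n • P i) x = 0 := by
  rw [Finsupp.sum_apply, Finsupp.sum]
  exact Finset.sum_eq_zero fun b hb => by
    rw [Finsupp.smul_apply, hall b (Finsupp.mem_support_iff.1 hb), smul_zero]

end Helpers

section Pick
variable {X : Type x}

def pick0 (a : X) (c : ℕ → X) : ℕ → X := fun i => if i = 0 then a else c i
def pick1 (a : X) (c : ℕ → X) : ℕ → X := fun i => if i = 1 then a else c i

lemma pick0_zero (a : X) (c : ℕ → X) : pick0 a c 0 = a := if_pos rfl
lemma pick0_ne (a : X) (c : ℕ → X) {i : ℕ} (h : i ≠ 0) : pick0 a c i = c i := if_neg h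
lemma pick1_one (a : X) (c : ℕ → X) : pick1 a c 1 = a := if_pos rfl
lemma pick1_ne (a : X) (c : ℕ → X) {i : ℕ} (h : i ≠ 1) : pick1 a c i = c i := if_neg h

def vmix (a b c d : ℕ → X) : ℕ → X := fun n =>
  if n % 4 = 0 then a (n / 4) else if n % 4 = 1 then b (n / 4)
  else if n % 4 = 2 then c (n / 4) else d (n / 4)

lemma vmix0 (a b c d : ℕ → X) (i : ℕ) : vmix a b c d (4 * i) = a i := by
  have h0 : (4 * i) % 4 = 0 := by omega
  have h4 : (4 * i) / 4 = i := by omega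
  simp [vmix, h0, h4]

lemma vmix1 (a b c d : ℕ → X) (i : ℕ) : vmix a b c d (4 * i + 1) = b i := by
  have h0 : (4 * i + 1) % 4 = 1 := by omega
  have h4 : (4 * i + 1) / 4 = i := by omega
  simp [vmix, h0, h4]

lemma vmix2 (a b c d : ℕ → X) (i : ℕ) : vmix a b c d (4 * i + 2) = c i := by
  have h0 : (4 * i + 2) % 4 = 2 := by omega
  have h4 : (4 * i + 2) / 4 = i := by omega
  simp [vmix, h0, h4]

lemma vmix3 (a b c d : ℕ → X) (i : ℕ) : vmix a b c d (4 * i + 3) = d i := by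
  have h0 : (4 * i + 3) % 4 = 3 := by omega
  have h4 : (4 * i + 3) / 4 = i := by omega
  simp [vmix, h0, h4]

end Pick
section Scaffold
open FreeNonUnitalNonAssocAlgebra
variable {k}
variable {A : Type v} [NonUnitalNonAssocRing A] [Module k A]
  [SMulCommClass k A A] [IsScalarTower k A A]

lemma mlProf_pos {m i : ℕ} (hi : i < m) : mlProf m i = 1 := by
  rw [mlProf_apply, if_pos hi]

lemma mlProf_ne_lt {m i : ℕ} (hi : mlProf m i ≠ 0) : i < m := by
  by_contra h
  rw [mlProf_apply, if_neg h] at hi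
  exact hi rfl

lemma scaffold (hA : IsPrimeAlg k A) (r : ℕ) :
    ∀ b : Fin (r + 1) → A, (∀ j, b j ≠ 0) →
    ∃ (G : FreeAlg k) (Q : ℕ →₀ ℕ) (d : Fin (r + 1) → ℕ),
      Function.Injective d ∧ (∀ j, Q (d j) = 1) ∧ G ∈ HwF k Q ∧
      ∃ v : ℕ → A, (∀ j, v (d j) = b j) ∧ lift k v G ≠ 0 := by
  induction r with
  | zero =>
      intro b hb
      refine ⟨of k 0, Finsupp.single 0 1, fun _ => 0, fun a c _ => Subsingleton.elim (α := Fin 1) a c,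
        fun j => Finsupp.single_eq_same, of_mem_HwF 0, fun _ => b 0, fun j => ?_, ?_⟩
      · rw [Subsingleton.elim (α := Fin 1) j 0]
      · rw [lift_of_apply]; exact hb 0
  | succ r ih =>
      intro b hb
      obtain ⟨G', Q', d', hdinj', hQ', hG', v', hv', hne'⟩ :=
        ih (fun j => b j.succ) (fun j => hb j.succ)
      set w : A := lift k v' G' with hwdef
      have hIJ := hA (Nid (b 0)) (Nid w) (Nid_isIdeal _) (Nid_isIdeal _)
        (Nid_ne_bot (hb 0)) (Nid_ne_bot hne')
      have hex : ∃ y ∈ {y : A | ∃ (t : ℕ) (f : FreeAlg k), IsMultilinear k (2 + t) f ∧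
          ∃ v : ℕ → A, v 0 ∈ ((Nid (b 0) : Submodule k A) : Set A) ∧
            v 1 ∈ ((Nid w : Submodule k A) : Set A) ∧
            lift k v f = y}, y ≠ 0 := by
        by_contra hcon
        push_neg at hcon
        exact hIJ (Submodule.span_eq_bot.2 hcon)
      obtain ⟨y, ⟨t, h, hml, v, hv0, hv1, hlift⟩, hyne⟩ := hex
      rw [isMultilinear_iff_HwF] at hml
      have hQh0 : mlProf (2 + t) 0 = 1 := mlProf_pos (by omega)
      have hQh1 : mlProf (2 + t) 1 = 1 := mlProf_pos (by omega)
      -- extract a generator in slot 0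
      have h0ne : lift k (Function.update v 0 (v 0)) h ≠ 0 := by
        rw [Function.update_eq_self, hlift]; exact hyne
      obtain ⟨s0, hs0mem, hs0ne⟩ := HwF_extract hml hQh0 hv0 h0ne
      obtain ⟨u0, hu0c, vA, hvA0, hs0eq⟩ := hs0mem
      set v2 : ℕ → A := Function.update v 0 s0 with hv2def
      -- extract a generator in slot 1
      have hv21 : v2 1 ∈ Submodule.span k (Ngen w) := by
        rw [hv2def, Function.update_of_ne one_ne_zero]
        exact hv1
      have h1ne : lift k (Function.update v2 1 (v2 1)) h ≠ 0 := by
        rw [Function.update_eq_self]; exact hs0ne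
      obtain ⟨s1, hs1mem, hs1ne⟩ := HwF_extract hml hQh1 hv21 h1ne
      obtain ⟨u1, hu1c, vB, hvB0, hs1eq⟩ := hs1mem
      -- renamed profiles
      have hinj0 : Function.Injective (fun i : ℕ => 4 * i) := by
        intro a c hac; dsimp only at hac; omega
      have hinj3 : Function.Injective (fun i : ℕ => 4 * i + 2) := by
        intro a c hac; dsimp only at hac; omega
      set P0 : ℕ →₀ ℕ := Finsupp.mapDomain (fun i => 4 * i) (vcF u0) with hP0def
      set PG : ℕ →₀ ℕ := Finsupp.mapDomain (fun i => 4 * i + 2) Q' with hPGdef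
      set P1' : ℕ → ℕ →₀ ℕ := pick0 PG (fun i => Finsupp.single (4 * i + 1) 1) with hP1'def
      set P1 : ℕ →₀ ℕ := (vcF u1).sum fun i n => n • P1' i with hP1def
      set P : ℕ → ℕ →₀ ℕ :=
        pick0 P0 (pick1 P1 (fun i => Finsupp.single (4 * i + 3) 1)) with hPdef
      -- substituted polynomials
      set g1 : ℕ → FreeAlg k := pick0 (lift k (fun i' => of k (4 * i' + 2)) G')
        (fun i => of k (4 * i + 1)) with hg1def
      set gsub : ℕ → FreeAlg k := pick0 (lift k (fun i' => of k (4 * i')) (liftword k u0))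
        (pick1 (lift k g1 (liftword k u1)) (fun i => of k (4 * i + 3))) with hgsubdef
      set G : FreeAlg k := lift k gsub h with hGdef
      set Qf : ℕ →₀ ℕ := (mlProf (2 + t)).sum fun i n => n • P i with hQfdef
      set d'' : Fin (r + 2) → ℕ := Fin.cases 0 (fun j => 4 * d' j + 2) with hd''def
      -- membership
      have hg : ∀ i, gsub i ∈ HwF k (P i) := by
        intro i
        rcases eq_or_ne i 0 with rfl | hi0
        · rw [hgsubdef, hPdef, pick0_zero, pick0_zero]
          exact rename_mem_HwF (fun i => 4 * i) (word_mem_HwF k u0)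
        rcases eq_or_ne i 1 with rfl | hi1
        · rw [hgsubdef, hPdef, pick0_ne _ _ one_ne_zero, pick0_ne _ _ one_ne_zero,
            pick1_one, pick1_one]
          refine HwF_subst (fun i' => ?_) (word_mem_HwF k u1)
          rcases eq_or_ne i' 0 with rfl | hi'0
          · rw [hg1def, hP1'def, pick0_zero, pick0_zero]
            exact rename_mem_HwF (fun i => 4 * i + 2) hG'
          · rw [hg1def, hP1'def, pick0_ne _ _ hi'0, pick0_ne _ _ hi'0]
            exact of_mem_HwF _
        · rw [hgsubdef, hPdef, pick0_ne _ _ hi0, pick0_ne _ _ hi0, pick1_ne _ _ hi1,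
            pick1_ne _ _ hi1]
          exact of_mem_HwF _
      have hGmem : G ∈ HwF k Qf := HwF_subst hg hml
      -- profile of the big polynomial at the designated slots
      have hP00 : P0 0 = 1 := by
        rw [hP0def]
        exact (Finsupp.mapDomain_apply hinj0 (vcF u0) 0).trans (by rw [vcF_apply, hu0c])
      have hPGx : ∀ j, PG (4 * d' j + 2) = 1 := fun j => by
        rw [hPGdef]
        exact (Finsupp.mapDomain_apply hinj3 Q' (d' j)).trans (hQ' j)
      have hP1x : ∀ j, P1 (4 * d' j + 2) = 1 := by
        intro j
        have hstep : P1 (4 * d' j + 2) = vcF u1 0 * P1' 0 (4 * d' j + 2) := by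
          rw [hP1def]
          refine fsum_apply_single ?_ ?_
          · rw [vcF_apply, hu1c]; omega
          · intro i hi _
            rw [hP1'def, pick0_ne _ _ hi]
            exact Finsupp.single_eq_of_ne (by omega)
        rw [hstep, vcF_apply, hu1c, one_mul, hP1'def, pick0_zero]
        exact hPGx j
      have hq : ∀ j, Qf (d'' j) = 1 := by
        intro j
        induction j using Fin.cases with
        | zero =>
            have hd0 : d'' 0 = 0 := by rw [hd''def]; exact Fin.cases_zero
            rw [hd0, hQfdef]
            have hstep : ((mlProf (2 + t)).sum fun i n => n • P i) 0
                = mlProf (2 + t) 0 * P 0 0 := by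
              refine fsum_apply_single (by rw [hQh0]; omega) ?_
              intro i hi hne
              rcases eq_or_ne i 1 with rfl | hi1
              · rw [hPdef, pick0_ne _ _ one_ne_zero, pick1_one, hP1def]
                refine fsum_apply_zero ?_
                intro i' hi'
                rcases eq_or_ne i' 0 with rfl | hi'0
                · rw [hP1'def, pick0_zero, hPGdef]
                  refine Finsupp.mapDomain_notin_range _ _ ?_
                  rintro ⟨i'', hi''⟩
                  dsimp only at hi''
                  omega
                · rw [hP1'def, pick0_ne _ _ hi'0]
                  exact Finsupp.single_eq_of_ne (by omega)
              · rw [hPdef, pick0_ne _ _ hi, pick1_ne _ _ hi1]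
                exact Finsupp.single_eq_of_ne (by omega)
            rw [hstep, hQh0, one_mul, hPdef, pick0_zero]
            exact hP00
        | succ jj =>
            have hdj : d'' jj.succ = 4 * d' jj + 2 := by
              rw [hd''def]; exact Fin.cases_succ _
            rw [hdj, hQfdef]
            have hstep : ((mlProf (2 + t)).sum fun i n => n • P i) (4 * d' jj + 2)
                = mlProf (2 + t) 1 * P 1 (4 * d' jj + 2) := by
              refine fsum_apply_single (by rw [hQh1]; omega) ?_
              intro i hi hne
              rcases eq_or_ne i 0 with rfl | hi0
              · rw [hPdef, pick0_zero, hP0def]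
                refine Finsupp.mapDomain_notin_range _ _ ?_
                rintro ⟨i'', hi''⟩
                dsimp only at hi''
                omega
              · rw [hPdef, pick0_ne _ _ hi0, pick1_ne _ _ hi]
                exact Finsupp.single_eq_of_ne (by omega)
            rw [hstep, hQh1, one_mul, hPdef, pick0_ne _ _ one_ne_zero, pick1_one]
            exact hP1x jj
      -- injectivity of the designated slots
      have hd0 : d'' 0 = 0 := by rw [hd''def]; exact Fin.cases_zero
      have hds : ∀ j, d'' j.succ = 4 * d' j + 2 := by
        intro j; rw [hd''def]; exact Fin.cases_succ _
      have hdinj'' : Function.Injective d'' := by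
        intro a c hac
        induction a using Fin.cases with
        | zero =>
            induction c using Fin.cases with
            | zero => rfl
            | succ cc => rw [hd0, hds] at hac; omega
        | succ aa =>
            induction c using Fin.cases with
            | zero => rw [hd0, hds] at hac; omega
            | succ cc =>
                rw [hds, hds] at hac
                have : d' aa = d' cc := by omega
                rw [hdinj' this]
      -- the witness assignment
      set vass : ℕ → A := vmix vA vB v' v with hvassdef
      have hvass : ∀ j, vass (d'' j) = b j := by
        intro j
        induction j using Fin.cases with
        | zero =>
            rw [hd0, hvassdef]
            have : (0 : ℕ) = 4 * 0 := by omega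
            rw [show vmix vA vB v' v 0 = vA 0 from vmix0 vA vB v' v 0]
            exact hvA0
        | succ jj =>
            rw [hds, hvassdef, vmix2]
            exact hv' jj
      -- evaluation
      have hagree : ∀ i, mlProf (2 + t) i ≠ 0 →
          lift k vass (gsub i) = Function.update v2 1 s1 i := by
        intro i hi
        rcases eq_or_ne i 0 with rfl | hi0
        · rw [hgsubdef, pick0_zero, rename_eval, eval_word]
          have hva : (fun i => vass (4 * i)) = vA := by
            funext i; rw [hvassdef, vmix0]
          rw [hva, hs0eq, Function.update_of_ne (by omega), hv2def, Function.update_self]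
        rcases eq_or_ne i 1 with rfl | hi1
        · rw [hgsubdef, pick0_ne _ _ one_ne_zero, pick1_one, lift_comp_eval, eval_word]
          have hvb : (fun i' => lift k vass (g1 i')) = vB := by
            funext i'
            rcases eq_or_ne i' 0 with rfl | hi'0
            · rw [hg1def, pick0_zero, rename_eval]
              have hvv : (fun i => vass (4 * i + 2)) = v' := by
                funext i; rw [hvassdef, vmix2]
              rw [hvv, hvB0]
            · rw [hg1def, pick0_ne _ _ hi'0, lift_of_apply, hvassdef, vmix1]
          rw [hvb, hs1eq, Function.update_self]
        · rw [hgsubdef, pick0_ne _ _ hi0, pick1_ne _ _ hi1, lift_of_apply, hvassdef, vmix3,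
            Function.update_of_ne hi1, hv2def, Function.update_of_ne hi0]
      have heval : lift k vass G = lift k (Function.update v2 1 s1) h := by
        rw [hGdef, lift_comp_eval]
        exact HwF_eval_congr hml hagree
      exact ⟨G, Qf, d'', hdinj'', hq, hGmem, vass, hvass, by rw [heval]; exact hs1ne⟩

end Scaffold
section Compactness
open FreeNonUnitalNonAssocAlgebra
variable {k}
variable {B : Type v} [NonUnitalNonAssocRing B] [Module k B]
  [SMulCommClass k B B] [IsScalarTower k B B]

lemma eval_bound (f : FreeAlg k) :
    ∃ N : ℕ, ∀ v w : ℕ → B, (∀ i, i < N → v i = w i) → lift k v f = lift k w f := by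
  have hf : f ∈ Submodule.span k {w : FreeAlg k | ∃ u : FreeMagma ℕ, w = liftword k u} := by
    rw [span_words_eq_top]; exact Submodule.mem_top
  induction hf using Submodule.span_induction with
  | mem x hx =>
      obtain ⟨u, rfl⟩ := hx
      obtain ⟨N, hN⟩ := varCount_bound u
      refine ⟨N, fun v w hvw => ?_⟩
      rw [eval_word, eval_word]
      refine magma_eval_congr u fun i hi => hvw i ?_
      by_contra hlt
      exact hi (hN i (by omega))
  | zero => exact ⟨0, fun v w _ => by simp⟩
  | add x y hx hy ihx ihy =>
      obtain ⟨N1, h1⟩ := ihx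
      obtain ⟨N2, h2⟩ := ihy
      exact ⟨max N1 N2, fun v w hvw => by
        rw [map_add, map_add, h1 v w (fun i hi => hvw i (by omega)),
          h2 v w (fun i hi => hvw i (by omega))]⟩
  | smul c x hx ihx =>
      obtain ⟨N, hN⟩ := ihx
      exact ⟨N, fun v w hvw => by rw [map_smul, map_smul, hN v w hvw]⟩

lemma magma_eval_continuous [TopologicalSpace B] [DiscreteTopology B] (u : FreeMagma ℕ) :
    Continuous (fun v : ℕ → B => FreeMagma.lift v u) := by
  induction u with
  | ih1 i =>
      have : (fun v : ℕ → B => FreeMagma.lift v (FreeMagma.of i)) = fun v => v i := by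
        funext v; simp
      rw [this]; exact continuous_apply i
  | ih2 a b ha hb =>
      have : (fun v : ℕ → B => FreeMagma.lift v (a * b))
          = (fun p : B × B => p.1 * p.2) ∘ (fun v =>
              (FreeMagma.lift v a, FreeMagma.lift v b)) := by
        funext v; simp
      rw [this]
      exact (continuous_of_discreteTopology).comp (ha.prodMk hb)

lemma eval_continuous [TopologicalSpace B] [DiscreteTopology B] (f : FreeAlg k) :
    Continuous (fun v : ℕ → B => lift k v f) := by
  have hf : f ∈ Submodule.span k {w : FreeAlg k | ∃ u : FreeMagma ℕ, w = liftword k u} := by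
    rw [span_words_eq_top]; exact Submodule.mem_top
  induction hf using Submodule.span_induction with
  | mem x hx =>
      obtain ⟨u, rfl⟩ := hx
      have : (fun v : ℕ → B => lift k v (liftword k u)) = fun v => FreeMagma.lift v u := by
        funext v; rw [eval_word]
      rw [this]
      exact magma_eval_continuous u
  | zero => exact continuous_const
  | add x y hx hy ihx ihy =>
      have : (fun v : ℕ → B => lift k v (x + y))
          = (fun p : B × B => p.1 + p.2) ∘ (fun v => (lift k v x, lift k v y)) := by
        funext v; simp
      rw [this]
      exact (continuous_of_discreteTopology).comp (ihx.prodMk ihy)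
  | smul c x hx ihx =>
      have : (fun v : ℕ → B => lift k v (c • x)) = (fun b : B => c • b) ∘ (fun v => lift k v x) := by
        funext v; simp
      rw [this]
      exact (continuous_of_discreteTopology).comp ihx

lemma compactness_cover [Finite B] (S : Set (FreeAlg k))
    (hcov : ∀ ψ : FreeAlg k →ₙₐ[k] B, ∃ f ∈ S, ψ f = 0) :
    ∃ (r : ℕ) (F : Fin (r + 1) → FreeAlg k), (∀ j, F j ∈ S) ∧
      ∀ ψ : FreeAlg k →ₙₐ[k] B, ∃ j, ψ (F j) = 0 := by
  letI : TopologicalSpace B := ⊥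
  haveI : DiscreteTopology B := ⟨rfl⟩
  have hpsilift : ∀ ψ : FreeAlg k →ₙₐ[k] B, ψ = lift k (ψ ∘ of k) := fun ψ =>
    (lift_comp_of k ψ).symm
  set U : S → Set (ℕ → B) := fun f => {vv | lift k vv f.val = 0} with hUdef
  have hUopen : ∀ f : S, IsOpen (U f) := fun f => by
    have : U f = (fun vv : ℕ → B => lift k vv f.val) ⁻¹' {0} := rfl
    rw [this]
    exact (eval_continuous f.val).isOpen_preimage _ (isOpen_discrete _)
  have hUcov : (Set.univ : Set (ℕ → B)) ⊆ ⋃ f : S, U f := by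
    intro vv _
    obtain ⟨f, hfS, hf0⟩ := hcov (lift k vv)
    exact Set.mem_iUnion.2 ⟨⟨f, hfS⟩, hf0⟩
  obtain ⟨tset, htset⟩ := isCompact_univ.elim_finite_subcover U hUopen hUcov
  have htne : tset.Nonempty := by
    have := htset (Set.mem_univ (fun _ => (0 : B)))
    rw [Set.mem_iUnion₂] at this
    obtain ⟨i, hi, _⟩ := this
    exact ⟨i, hi⟩
  obtain ⟨r, hr⟩ : ∃ r, tset.card = r + 1 := by
    rcases Nat.exists_eq_add_of_lt (Finset.card_pos.2 htne) with ⟨r, hr⟩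
    exact ⟨r, by omega⟩
  refine ⟨r, fun j => ((tset.equivFin.symm (Fin.cast hr.symm j)).val : S).val,
    fun j => ((tset.equivFin.symm (Fin.cast hr.symm j)).val : S).property, fun ψ => ?_⟩
  have hv := htset (Set.mem_univ (ψ ∘ of k))
  rw [Set.mem_iUnion₂] at hv
  obtain ⟨i, hit, hiU⟩ := hv
  refine ⟨Fin.cast hr (tset.equivFin ⟨i, hit⟩), ?_⟩
  have hinv : tset.equivFin.symm (Fin.cast hr.symm (Fin.cast hr (tset.equivFin ⟨i, hit⟩)))
      = ⟨i, hit⟩ := by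
    have : Fin.cast hr.symm (Fin.cast hr (tset.equivFin ⟨i, hit⟩)) = tset.equivFin ⟨i, hit⟩ := rfl
    rw [this, Equiv.symm_apply_apply]
  dsimp only
  rw [hinv, hpsilift ψ]
  exact hiU

end Compactness
section Main
open FreeNonUnitalNonAssocAlgebra

theorem prime_section' (k : Type u) [CommRing k]
    (A : Type v) [NonUnitalNonAssocRing A] [Module k A] [SMulCommClass k A A]
    [IsScalarTower k A A] [Finite A]
    (A' : Type w) [NonUnitalNonAssocRing A'] [Module k A'] [SMulCommClass k A' A']
    [IsScalarTower k A' A'] [Finite A']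
    (hA : IsPrimeAlg k A) (hPI : Ids k A' ⊆ Ids k A) :
    ∃ (R : NonUnitalSubalgebra k A') (I : Submodule k ↥R) (φ : ↥R →ₙₐ[k] A),
      IsIdeal k ↥R I ∧ Surjective φ ∧ (∀ x : ↥R, φ x = 0 ↔ x ∈ I) := by
  classical
  obtain ⟨e, he⟩ := exists_surjective_nat A
  set π : FreeAlg k →ₙₐ[k] A := lift k e with hπdef
  by_cases hker : ∃ ψ : FreeAlg k →ₙₐ[k] A', ∀ f, ψ f = 0 → π f = 0
  · -- good case: build the section
    obtain ⟨ψ, hψ⟩ := hker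
    set R : NonUnitalSubalgebra k A' := NonUnitalAlgHom.range ψ with hRdef
    have hchoice : ∀ x : ↥R, ∃ f, ψ f = (x : A') := fun x =>
      (NonUnitalAlgHom.mem_range ψ).1 x.2
    set Φ : ↥R → A := fun x => π (Classical.choose (hchoice x)) with hΦdef
    have hwd : ∀ (x : ↥R) (f : FreeAlg k), ψ f = (x : A') → Φ x = π f := by
      intro x f hf
      have hc := Classical.choose_spec (hchoice x)
      have h0 : ψ (Classical.choose (hchoice x) - f) = 0 := by
        rw [map_sub, hc, hf, sub_self]
      have h1 := hψ _ h0
      rw [map_sub, sub_eq_zero] at h1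
      exact h1
    have hzero : Φ 0 = 0 := by
      have : Φ 0 = π 0 := hwd 0 0 (by rw [map_zero]; rfl)
      rw [this, map_zero]
    have hadd : ∀ x y : ↥R, Φ (x + y) = Φ x + Φ y := by
      intro x y
      obtain ⟨f, hf⟩ := hchoice x
      obtain ⟨g, hg⟩ := hchoice y
      rw [hwd x f hf, hwd y g hg, hwd (x + y) (f + g) (by rw [map_add, hf, hg]; rfl), map_add]
    have hsmul : ∀ (c : k) (x : ↥R), Φ (c • x) = c • Φ x := by
      intro c x
      obtain ⟨f, hf⟩ := hchoice x
      rw [hwd x f hf, hwd (c • x) (c • f) (by rw [map_smul, hf]; rfl), map_smul]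
    have hmul : ∀ x y : ↥R, Φ (x * y) = Φ x * Φ y := by
      intro x y
      obtain ⟨f, hf⟩ := hchoice x
      obtain ⟨g, hg⟩ := hchoice y
      rw [hwd x f hf, hwd y g hg, hwd (x * y) (f * g) (by rw [map_mul, hf, hg]; rfl), map_mul]
    set φ : ↥R →ₙₐ[k] A := ⟨⟨⟨Φ, hsmul⟩, hzero, hadd⟩, hmul⟩ with hφdef
    have hφap : ∀ x, φ x = Φ x := fun x => rfl
    set I : Submodule k ↥R :=
      { carrier := {x | Φ x = 0}
        add_mem' := by
          intro a c ha hc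
          simp only [Set.mem_setOf_eq] at *
          rw [hadd, ha, hc, add_zero]
        zero_mem' := hzero
        smul_mem' := by
          intro c x hx
          simp only [Set.mem_setOf_eq] at *
          rw [hsmul, hx, smul_zero] } with hIdef
    have hImem : ∀ x : ↥R, x ∈ I ↔ Φ x = 0 := fun x => Iff.rfl
    refine ⟨R, I, φ, ?_, ?_, ?_⟩
    · intro a x hx
      rw [hImem] at hx
      constructor
      · rw [hImem, hmul, hx, mul_zero]
      · rw [hImem, hmul, hx, zero_mul]
    · intro a
      obtain ⟨i, hi⟩ := he a
      have hπ : π (of k i) = a := by rw [hπdef, lift_of_apply]; exact hi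
      refine ⟨⟨ψ (of k i), (NonUnitalAlgHom.mem_range ψ).2 ⟨of k i, rfl⟩⟩, ?_⟩
      rw [hφap, hwd _ (of k i) rfl, hπ]
    · intro x
      rw [hφap, hImem]
  · -- bad case: contradiction
    exfalso
    push_neg at hker
    have hcov : ∀ ψ : FreeAlg k →ₙₐ[k] A', ∃ f ∈ {f : FreeAlg k | π f ≠ 0}, ψ f = 0 := by
      intro ψ
      obtain ⟨f, hf0, hfπ⟩ := hker ψ
      exact ⟨f, hfπ, hf0⟩
    obtain ⟨r, Fj, hFS, hFcov⟩ := compactness_cover _ hcov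
    set b : Fin (r + 1) → A := fun j => π (Fj j) with hbdef
    have hb : ∀ j, b j ≠ 0 := fun j => hFS j
    obtain ⟨G, Q, d, hdinj, hQd, hGmem, v, hvd, hvne⟩ := scaffold hA r b hb
    choose NN hNN using fun j => eval_bound (B := A) (k := k) (Fj j)
    set Nf : ℕ := Finset.univ.sup NN with hNfdef
    have hNfle : ∀ j, NN j ≤ Nf := fun j => Finset.le_sup (Finset.mem_univ j)
    set gσ : ℕ → FreeAlg k := fun i =>
      if h : ∃ j, d j = i then Fj (Classical.choose h) else of k (Nf + i) with hgσdef
    have hgσd : ∀ j, gσ (d j) = Fj j := by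
      intro j
      have hex : ∃ j', d j' = d j := ⟨j, rfl⟩
      rw [hgσdef]
      dsimp only
      rw [dif_pos hex]
      exact congrArg Fj (hdinj (Classical.choose_spec hex))
    have hgσn : ∀ i, (¬ ∃ j, d j = i) → gσ i = of k (Nf + i) := by
      intro i hi
      rw [hgσdef]
      dsimp only
      rw [dif_neg hi]
    set gfin : FreeAlg k := lift k gσ G with hgfindef
    have hIdA' : gfin ∈ Ids k A' := by
      intro ψ
      obtain ⟨j, hj⟩ := hFcov ψ
      have hψeq : ψ (lift k gσ G) = lift k (fun i => ψ (gσ i)) G := by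
        calc ψ (lift k gσ G) = lift k (⇑ψ ∘ of k) (lift k gσ G) := by rw [lift_comp_of]
          _ = lift k (fun i => lift k (⇑ψ ∘ of k) (gσ i)) G := lift_comp_eval _ _ _
          _ = lift k (fun i => ψ (gσ i)) G := by rw [lift_comp_of]
      rw [hgfindef, hψeq]
      refine HwF_eval_vanish hGmem (j := d j) (by rw [hQd j]; omega) ?_
      show ψ (gσ (d j)) = 0
      rw [hgσd j]
      exact hj
    have hIdA : gfin ∈ Ids k A := hPI hIdA'
    set vρ : ℕ → A := fun n => if n < Nf then e n else v (n - Nf) with hvρdef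
    have hρF : ∀ j, lift k vρ (Fj j) = b j := by
      intro j
      have hag := hNN j vρ e (fun i hi => by
        rw [hvρdef]
        exact if_pos (lt_of_lt_of_le hi (hNfle j)))
      rw [hag, hbdef, hπdef]
    have hρfin : lift k vρ gfin = lift k v G := by
      rw [hgfindef, lift_comp_eval]
      refine HwF_eval_congr hGmem ?_
      intro i hQi
      by_cases hex : ∃ j, d j = i
      · obtain ⟨j, rfl⟩ := hex
        show lift k vρ (gσ (d j)) = v (d j)
        rw [hgσd j, hρF j, hvd j]
      · show lift k vρ (gσ i) = v i
        rw [hgσn i hex, lift_of_apply, hvρdef]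
        dsimp only
        rw [if_neg (by omega)]
        congr 1
        omega
    have h0 : lift k vρ gfin = 0 := hIdA (lift k vρ)
    rw [hρfin] at h0
    exact hvne h0

end Main
/-- If `A, A'` are finite algebras, `A` is prime and
`Id(A') ⊆ Id(A)`, then `A` is isomorphic to a section of `A'`: there are a
subalgebra `R` of `A'` and an ideal `I` of `R` with `A ≅ R/I` (encoded by a
surjective homomorphism `R → A` whose kernel is the ideal `I`). -/
theorem prime_section (k : Type u) [CommRing k]
    (A : Type v) [NonUnitalNonAssocRing A] [Module k A] [SMulCommClass k A A]
    [IsScalarTower k A A] [Finite A]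
    (A' : Type w) [NonUnitalNonAssocRing A'] [Module k A'] [SMulCommClass k A' A']
    [IsScalarTower k A' A'] [Finite A']
    (hA : IsPrimeAlg k A) (hPI : Ids k A' ⊆ Ids k A) :
    ∃ (R : NonUnitalSubalgebra k A') (I : Submodule k ↥R) (φ : ↥R →ₙₐ[k] A),
      IsIdeal k ↥R I ∧ Surjective φ ∧ (∀ x : ↥R, φ x = 0 ↔ x ∈ I) := by
  exact prime_section' k A A' hA hPI
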